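/- For the tree t_n = a((bc)^n) (a root labeled a with 2n children alternately labeled b and c, all leaves), and any k >= 1 with padding symbol Box = a: (i) |t_n| = 2n+1; (ii) the k-th order degree-label entropy satisfies H^{deg,ell}_k(t_n) = 2n; (iii) the k-th order label entropy satisfies H^ell_k(t_n) >= 2n; (iv) the label-shape entropy satisfies H_k(t_n) <= log2(e) + log2(n - floor((k-1)/2)) + 2. -/

import Mathlib

/-- Last `k` entries of a list. -/
def lastN {α} (k : ℕ) (l : List α) : List α := l.drop (l.length - k)

/-- Generic empirical entropy in per-node form: for each node `e` of `D` we add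
`log2 (#{e' | cond e' = cond e} / #{e' | cond e' = cond e ∧ val e' = val e})`.
Grouping nodes by the pair `(cond, val)` recovers the usual form
`∑_z ∑_w m_{z,w} log2 (m_z / m_{z,w})`. -/
noncomputable def entropySum {α β γ : Type*} [DecidableEq β] [DecidableEq γ]
    (D : List α) (cond : α → β) (val : α → γ) : ℝ :=
  (D.map (fun e => Real.logb 2
    ((D.countP (fun e' => decide (cond e' = cond e)) : ℝ) /
     (D.countP (fun e' => decide (cond e' = cond e ∧ val e' = val e)) : ℝ)))).sum

/-- `k`-label-history given the list of ancestor labels (padded with `box`). -/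
def kLabHist {σ} (box : σ) (k : ℕ) (h : List σ) : List σ :=
  lastN k (List.replicate k box ++ h)
-- Unranked ordered labeled trees and forests.
mutual
inductive UTree (σ : Type) where
  | node (a : σ) (children : UForest σ) : UTree σ
inductive UForest (σ : Type) where
  | nil : UForest σ
  | cons (t : UTree σ) (f : UForest σ) : UForest σ
end

/-- Number of trees in a forest. -/
def UForest.len {σ} : UForest σ → ℕ
  | .nil => 0
  | .cons _ f => 1 + f.len

mutual
/-- List of (label-history, label, degree) triples, one per node. -/
def udata {σ} (hist : List σ) : UTree σ → List (List σ × σ × ℕ)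
  | .node a f => (hist, a, f.len) :: fudata (hist ++ [a]) f
/-- Node data of a forest of subtrees rooted at label-history `hist`. -/
def fudata {σ} (hist : List σ) : UForest σ → List (List σ × σ × ℕ)
  | .nil => []
  | .cons t f => udata hist t ++ fudata hist f
end

/-- Number of nodes of an unranked tree. -/
def sizeU {σ} (t : UTree σ) : ℕ := (udata [] t).length
/-- `k`-th order label entropy `H^ℓ_k` of an unranked tree. -/
noncomputable def HlU {σ} [DecidableEq σ] (box : σ) (k : ℕ) (t : UTree σ) : ℝ :=
  entropySum (udata [] t) (fun e => kLabHist box k e.1) (fun e => e.2.1)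

/-- `k`-th order label-degree entropy `H^{ℓ,deg}_k` of an unranked tree. -/
noncomputable def HldU {σ} [DecidableEq σ] (box : σ) (k : ℕ) (t : UTree σ) : ℝ :=
  entropySum (udata [] t) (fun e => (kLabHist box k e.1, e.2.1)) (fun e => e.2.2)

/-- `k`-th order degree-label entropy `H^{deg,ℓ}_k` of an unranked tree. -/
noncomputable def HdlU {σ} [DecidableEq σ] (box : σ) (k : ℕ) (t : UTree σ) : ℝ :=
  entropySum (udata [] t) (fun e => (kLabHist box k e.1, e.2.2)) (fun e => e.2.1)

/-- Degree entropy `H^deg` of an unranked tree: `∑_i n_i log2(|t|/n_i)`. -/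
noncomputable def HdegU {σ} [DecidableEq σ] (t : UTree σ) : ℝ :=
  entropySum (udata [] t) (fun _ => ()) (fun e => e.2.2)
/-- Labeled binary trees: every node has 0 or 2 children. -/
inductive LBT (σ : Type) where
  | leaf (a : σ) : LBT σ
  | node (a : σ) (l r : LBT σ) : LBT σ

/-- List of (history, label, degree) triples of a binary tree, one per node.
The history records alternately labels and direction bits (`false` = left). -/
def ldata {σ} (hist : List (σ × Bool)) : LBT σ → List (List (σ × Bool) × σ × ℕ)
  | .leaf a => [(hist, a, 0)]
  | .node a l r =>
      (hist, a, 2) :: (ldata (hist ++ [(a, false)]) l ++ ldata (hist ++ [(a, true)]) r)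
/-- `k`-history of a node given its full history: the last `k` entries after
padding on the left with `(box, false)`. -/
def kHist {σ} (box : σ) (k : ℕ) (h : List (σ × Bool)) : List (σ × Bool) :=
  lastN k (List.replicate k (box, false) ++ h)

/-- `k`-th order label-shape entropy of a labeled binary tree. -/
noncomputable def Hls {σ} [DecidableEq σ] (box : σ) (k : ℕ) (t : LBT σ) : ℝ :=
  entropySum (ldata [] t) (fun e => kHist box k e.1) (fun e => e.2)
/-- The first-child next-sibling encoding of a forest: the left child of a node is
its first child, the right child its next sibling; missing children become
`box`-labeled dummy leaves. -/
def fcns {σ} (box : σ) : UForest σ → LBT σ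
  | .nil => .leaf box
  | .cons (.node a f) rest => .node a (fcns box f) (fcns box rest)

/-- The fcns encoding of a single unranked tree. -/
def fcnsT {σ} (box : σ) (t : UTree σ) : LBT σ := fcns box (.cons t .nil)

/-- The three-letter alphabet `{a, b, c}`. -/
inductive ABC where
  | a | b | c
deriving DecidableEq

/-- A single leaf node with label `x`. -/
def leafU {σ} (x : σ) : UTree σ := .node x .nil

/-- The forest `(bc)^n` of alternating `b`- and `c`-labeled leaves. -/
def bcForest : ℕ → UForest ABC
  | 0 => .nil
  | n + 1 => .cons (leafU .b) (.cons (leafU .c) (bcForest n))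

/-- The tree `t_n = a((bc)^n)`: a root labeled `a` with `2n` leaf children,
alternately labeled `b` and `c`. -/
def tBC (n : ℕ) : UTree ABC := .node .a (bcForest n)

namespace TBCproof
open List

lemma countP_flatMap {α β} (p : β → Bool) (l : List α) (f : α → List β) :
    (l.flatMap f).countP p = (l.map (fun a => (f a).countP p)).sum := by
  induction l with
  | nil => simp
  | cons a l ih => simp [List.countP_append, ih]

lemma sum_map_range {M} [AddCommMonoid M] (n : ℕ) (f : ℕ → M) :
    ((List.range n).map f).sum = ∑ j ∈ Finset.range n, f j := by
  induction n with
  | zero => simp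
  | succ m ih => rw [List.range_succ, Finset.sum_range_succ, ← ih]; simp

lemma lastN_replicate_concat {α} (k : ℕ) (x : α) :
    lastN k (List.replicate k x ++ [x]) = List.replicate k x := by
  rw [← List.replicate_succ' ]
  simp [lastN, List.drop_replicate]

lemma len_bcForest (n : ℕ) : (bcForest n).len = 2 * n := by
  induction n with
  | zero => rfl
  | succ m ih => simp [bcForest, UForest.len, ih]; ring

lemma fudata_bcForest (h : List ABC) (n : ℕ) :
    fudata h (bcForest n) =
      (List.range n).flatMap (fun _ => [(h, ABC.b, 0), (h, ABC.c, 0)]) := by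
  induction n with
  | zero => rfl
  | succ m ih =>
      rw [List.range_succ_eq_map, List.flatMap_cons]
      simp only [bcForest, fudata, udata, leafU, UForest.len, List.flatMap_map]
      simp [ih]

lemma udata_tBC (n : ℕ) :
    udata [] (tBC n) =
      ([], ABC.a, 2 * n) ::
        (List.range n).flatMap (fun _ => [([ABC.a], ABC.b, 0), ([ABC.a], ABC.c, 0)]) := by
  simp [tBC, udata, len_bcForest, fudata_bcForest]

lemma sizeU_tBC (n : ℕ) : sizeU (tBC n) = 2 * n + 1 := by
  simp [sizeU, udata_tBC, List.length_flatMap, Function.comp_def, List.map_const', List.sum_replicate, smul_eq_mul]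
  omega

lemma kLabHist_nil (k : ℕ) : kLabHist ABC.a k ([] : List ABC) = List.replicate k ABC.a := by
  simp [kLabHist, lastN]

lemma kLabHist_single (k : ℕ) : kLabHist ABC.a k [ABC.a] = List.replicate k ABC.a :=
  lastN_replicate_concat k ABC.a


lemma sum_map_flatMap {α β} (g : β → ℝ) (l : List α) (f : α → List β) :
    ((l.flatMap f).map g).sum = (l.map (fun a => ((f a).map g).sum)).sum := by
  induction l with
  | nil => simp
  | cons a l ih => simp [ih]

lemma countP_udata (n : ℕ) (p : List ABC × ABC × ℕ → Bool) :
    (udata [] (tBC n)).countP p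
      = (if p ([], ABC.a, 2*n) then 1 else 0)
        + n * ((if p ([ABC.a], ABC.b, 0) then 1 else 0)
            + (if p ([ABC.a], ABC.c, 0) then 1 else 0)) := by
  rw [udata_tBC, List.countP_cons, countP_flatMap, sum_map_range]
  simp [List.countP_cons, Finset.sum_const, mul_comm, add_comm]

lemma mapsum_udata (n : ℕ) (f : List ABC × ABC × ℕ → ℝ) :
    ((udata [] (tBC n)).map f).sum
      = f ([], ABC.a, 2*n) + n * (f ([ABC.a], ABC.b, 0) + f ([ABC.a], ABC.c, 0)) := by
  rw [udata_tBC, List.map_cons, List.sum_cons, sum_map_flatMap, sum_map_range]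
  simp [Finset.sum_const, mul_comm]
  ring

lemma HdlU_tBC (n k : ℕ) (hn : 1 ≤ n) : HdlU ABC.a k (tBC n) = 2 * n := by
  have h2n : (2:ℕ) * n ≠ 0 := by omega
  rw [HdlU, entropySum, mapsum_udata]
  simp only [countP_udata, kLabHist_nil, kLabHist_single]
  have hn' : (n:ℝ) ≠ 0 := Nat.cast_ne_zero.mpr (by omega)
  simp [h2n, Ne.symm h2n]
  rw [mul_comm (n:ℝ) 2, mul_div_assoc, div_self hn', mul_one]
  simp [Real.logb_self_eq_one]
  ring


lemma HlU_tBC (n k : ℕ) (hn : 1 ≤ n) : (2*n : ℝ) ≤ HlU ABC.a k (tBC n) := by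
  rw [HlU, entropySum, mapsum_udata]
  simp only [countP_udata, kLabHist_nil, kLabHist_single]
  simp
  have hn' : (0:ℝ) < n := by exact_mod_cast hn
  have l1 : (1:ℝ) ≤ Real.logb 2 ((1 + ↑n * 2) / ↑n) := by
    calc (1:ℝ) = Real.logb 2 2 := (Real.logb_self_eq_one (by norm_num)).symm
      _ ≤ _ := Real.logb_le_logb_of_le (by norm_num) (by norm_num)
        (by rw [le_div_iff₀ hn']; linarith)
  have l0 : (0:ℝ) ≤ Real.logb 2 (1 + ↑n * 2) := Real.logb_nonneg (by norm_num) (by linarith)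
  nlinarith


/-! ### Part (iv): structure of the fcns encoding -/

def aF : ABC × Bool := (ABC.a, false)
def aT : ABC × Bool := (ABC.a, true)
def bF : ABC × Bool := (ABC.b, false)
def bT : ABC × Bool := (ABC.b, true)
def cF : ABC × Bool := (ABC.c, false)
def cT : ABC × Bool := (ABC.c, true)

/-- `(bT cT)^j` -/
def alt : ℕ → List (ABC × Bool)
  | 0 => []
  | j+1 => bT :: cT :: alt j

lemma alt_concat (j : ℕ) : alt j ++ [bT, cT] = alt (j+1) := by
  induction j with
  | zero => rfl
  | succ m ih => simp only [alt, List.cons_append, ih]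

lemma length_alt (j : ℕ) : (alt j).length = 2 * j := by
  induction j with
  | zero => rfl
  | succ m ih => simp [alt, ih]; ring

def blocks (g : List (ABC × Bool)) : List (List (ABC × Bool) × ABC × ℕ) :=
  [(g, ABC.b, 2), (g ++ [bF], ABC.a, 0), (g ++ [bT], ABC.c, 2), (g ++ [bT, cF], ABC.a, 0)]

lemma ldata_chain (n : ℕ) (h : List (ABC × Bool)) :
    ldata h (fcns ABC.a (bcForest n)) =
      (List.range n).flatMap (fun j => blocks (h ++ alt j)) ++ [(h ++ alt n, ABC.a, 0)] := by
  induction n generalizing h with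
  | zero => simp [bcForest, fcns, ldata, alt]
  | succ m ih =>
      rw [List.range_succ_eq_map, List.flatMap_cons, List.flatMap_map]
      show ldata h (.node ABC.b (.leaf ABC.a) (.node ABC.c (.leaf ABC.a) (fcns ABC.a (bcForest m)))) = _
      rw [ldata, ldata, ldata, ldata, ih]
      simp only [blocks, alt, Function.comp_def, ← alt_concat]
      simp [bF, bT, cF, cT]

def Dlist (n : ℕ) : List (List (ABC × Bool) × ABC × ℕ) :=
  ([], ABC.a, 2) ::
    ((List.range n).flatMap (fun j => blocks (aF :: alt j))
      ++ [(aF :: alt n, ABC.a, 0), ([aT], ABC.a, 0)])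

lemma ldata_fcnsT (n : ℕ) : ldata [] (fcnsT ABC.a (tBC n)) = Dlist n := by
  show ldata [] (.node ABC.a (fcns ABC.a (bcForest n)) (.leaf ABC.a)) = _
  rw [ldata, ldata_chain]
  simp [Dlist, aF, aT, ldata]


/-! ### kHist computations -/

lemma replicate_append_cons {α} (m : ℕ) (x : α) (l : List α) :
    List.replicate m x ++ (x :: l) = List.replicate (m+1) x ++ l := by
  rw [List.replicate_succ']; simp

lemma lastN_append_right {α} (m : ℕ) (l1 l2 : List α) (h : m ≤ l2.length) :
    lastN m (l1 ++ l2) = lastN m l2 := by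
  unfold lastN
  rw [List.length_append, List.drop_append,
      List.drop_eq_nil_of_le (by omega),
      show l1.length + l2.length - m - l1.length = l2.length - m by omega,
      List.nil_append]

lemma kHist_cons (k j : ℕ) :
    kHist ABC.a k (aF :: alt j) = lastN k (List.replicate (k+1) aF ++ alt j) := by
  rw [kHist, show ((ABC.a, false)) = aF from rfl, replicate_append_cons]

lemma Kz_padded (k j : ℕ) (h : 2*j < k) :
    kHist ABC.a k (aF :: alt j) = List.replicate (k - 2*j) aF ++ alt j := by
  rw [kHist_cons]
  unfold lastN
  rw [List.length_append, List.length_replicate, length_alt,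
      List.drop_append, List.drop_replicate]
  simp only [List.length_replicate]
  rw [show k + 1 + 2*j - k - (k+1) = 0 by omega, List.drop_zero]
  congr 2
  omega

lemma Kz_pure (k j : ℕ) (h : k ≤ 2*j) :
    kHist ABC.a k (aF :: alt j) = lastN k (alt j) := by
  rw [kHist_cons, lastN_append_right _ _ _ (by rw [length_alt]; omega)]

lemma lastN_alt_stable (k j : ℕ) (h : k ≤ 2*j) :
    lastN k (alt (j+1)) = lastN k (alt j) := by
  show lastN k ([bT, cT] ++ alt j) = _
  exact lastN_append_right _ _ _ (by rw [length_alt]; omega)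

lemma lastN_alt_eq (k j : ℕ) (h : k ≤ 2*j) :
    lastN k (alt j) = lastN k (alt ((k+1)/2)) := by
  have H : ∀ m, (k+1)/2 ≤ m → lastN k (alt m) = lastN k (alt ((k+1)/2)) := by
    intro m hm
    induction m, hm using Nat.le_induction with
    | base => rfl
    | succ m hm ih => rw [lastN_alt_stable k m (by omega), ih]
  exact H j (by omega)

lemma aF_not_mem_alt (j : ℕ) : aF ∉ alt j := by
  induction j with
  | zero => simp [alt]
  | succ m ih => simp [alt, aF, bT, cT] at ih ⊢; exact ih

lemma count_aF_alt (j : ℕ) : (alt j).count aF = 0 :=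
  List.count_eq_zero.mpr (aF_not_mem_alt j)

lemma count_aF_lastN_alt (k j : ℕ) : (lastN k (alt j)).count aF = 0 :=
  Nat.le_zero.mp (le_trans ((List.drop_sublist _ _).count_le aF) (le_of_eq (count_aF_alt j)))

/-- The key classification of `kHist` on the `b`-spine. -/
lemma Kz_eq_iff (k j j' : ℕ) (hk : 1 ≤ k) :
    kHist ABC.a k (aF :: alt j) = kHist ABC.a k (aF :: alt j') ↔
      min j ((k+1)/2) = min j' ((k+1)/2) := by
  constructor
  · intro h
    rcases lt_or_ge (2*j) k with hj | hj <;> rcases lt_or_ge (2*j') k with hj' | hj'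
    · rw [Kz_padded k j hj, Kz_padded k j' hj'] at h
      have := congrArg (List.count aF) h
      rw [List.count_append, List.count_append, List.count_replicate, List.count_replicate,
          count_aF_alt, count_aF_alt] at this
      simp at this
      omega
    · exfalso
      rw [Kz_padded k j hj, Kz_pure k j' hj'] at h
      have := congrArg (List.count aF) h
      rw [List.count_append, List.count_replicate, count_aF_alt, count_aF_lastN_alt] at this
      simp at this
      omega
    · exfalso
      rw [Kz_pure k j hj, Kz_padded k j' hj'] at h
      have := congrArg (List.count aF) h
      rw [List.count_append, List.count_replicate, count_aF_alt, count_aF_lastN_alt] at this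
      simp at this
      omega
    · omega
  · intro h
    rcases lt_or_ge (2*j) k with hj | hj <;> rcases lt_or_ge (2*j') k with hj' | hj'
    · have : j = j' := by omega
      rw [this]
    · omega
    · omega
    · rw [Kz_pure k j hj, Kz_pure k j' hj', lastN_alt_eq k j hj, lastN_alt_eq k j' hj']


/-! ### Last-symbol family separation -/

lemma getLast?_lastN {α} (m : ℕ) (l : List α) (h1 : 1 ≤ m) (h2 : 1 ≤ l.length) :
    (lastN m l).getLast? = l.getLast? := by
  have hne : l.drop (l.length - m) ≠ [] := by
    intro h
    have := congrArg List.length h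
    rw [List.length_drop] at this
    simp at this
    omega
  obtain ⟨x, hx⟩ := Option.isSome_iff_exists.mp (by rwa [List.getLast?_isSome] : (l.drop (l.length - m)).getLast?.isSome)
  conv_rhs => rw [← List.take_append_drop (l.length - m) l]
  rw [lastN, List.getLast?_append, hx]
  rfl

lemma kHist_getLast (k : ℕ) (h : List (ABC × Bool)) (hk : 1 ≤ k) :
    (kHist ABC.a k h).getLast? = (List.replicate k (ABC.a, false) ++ h).getLast? := by
  apply getLast?_lastN _ _ hk
  simp
  omega

lemma kHist_eq_getLast {k : ℕ} (hk : 1 ≤ k) {h1 h2 : List (ABC × Bool)}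
    (h : kHist ABC.a k h1 = kHist ABC.a k h2) :
    (List.replicate k (ABC.a, false) ++ h1).getLast?
      = (List.replicate k (ABC.a, false) ++ h2).getLast? := by
  rw [← kHist_getLast k h1 hk, ← kHist_getLast k h2 hk, h]

lemma gl_concat (k : ℕ) (h : List (ABC × Bool)) (y : ABC × Bool) :
    (List.replicate k (ABC.a, false) ++ (h ++ [y])).getLast? = some y := by
  rw [← List.append_assoc]
  exact List.getLast?_concat

lemma gl_nil (k : ℕ) (hk : 1 ≤ k) :
    (List.replicate k (ABC.a, false) ++ ([] : List (ABC × Bool))).getLast? = some aF := by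
  rw [List.append_nil, show k = (k-1)+1 by omega, List.replicate_succ']
  exact List.getLast?_concat

lemma gl_B (k j : ℕ) (hk : 1 ≤ k) :
    (List.replicate k (ABC.a, false) ++ (aF :: alt j)).getLast? = some aF ∨
    (List.replicate k (ABC.a, false) ++ (aF :: alt j)).getLast? = some cT := by
  cases j with
  | zero =>
      left
      exact gl_concat k [] aF
  | succ m =>
      right
      rw [show aF :: alt (m+1) = (aF :: (alt m ++ [bT])) ++ [cT] by
        rw [← alt_concat]; simp]
      exact gl_concat k _ cT

lemma gl_LB (k j : ℕ) :
    (List.replicate k (ABC.a, false) ++ ((aF :: alt j) ++ [bF])).getLast? = some bF :=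
  gl_concat k _ bF

lemma gl_C (k j : ℕ) :
    (List.replicate k (ABC.a, false) ++ ((aF :: alt j) ++ [bT])).getLast? = some bT :=
  gl_concat k _ bT

lemma gl_LC (k j : ℕ) :
    (List.replicate k (ABC.a, false) ++ ((aF :: alt j) ++ [bT, cF])).getLast? = some cF := by
  rw [show (aF :: alt j) ++ [bT, cF] = ((aF :: alt j) ++ [bT]) ++ [cF] by simp]
  exact gl_concat k _ cF

lemma gl_RL (k : ℕ) :
    (List.replicate k (ABC.a, false) ++ [aT]).getLast? = some aT :=
  gl_concat k [] aT


/-! ### Counting over Dlist -/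

lemma countP_blocks (g : List (ABC × Bool)) (p : List (ABC × Bool) × ABC × ℕ → Bool) :
    (blocks g).countP p
      = (if p (g, ABC.b, 2) then 1 else 0) + (if p (g ++ [bF], ABC.a, 0) then 1 else 0)
        + (if p (g ++ [bT], ABC.c, 2) then 1 else 0)
        + (if p (g ++ [bT, cF], ABC.a, 0) then 1 else 0) := by
  simp only [blocks, List.countP_cons, List.countP_nil]
  omega

lemma mapsum_blocks (g : List (ABC × Bool)) (f : List (ABC × Bool) × ABC × ℕ → ℝ) :
    ((blocks g).map f).sum
      = f (g, ABC.b, 2) + f (g ++ [bF], ABC.a, 0) + f (g ++ [bT], ABC.c, 2)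
        + f (g ++ [bT, cF], ABC.a, 0) := by
  simp only [blocks, List.map_cons, List.map_nil, List.sum_cons, List.sum_nil]
  ring

lemma countP_Dlist (n : ℕ) (p : List (ABC × Bool) × ABC × ℕ → Bool) :
    (Dlist n).countP p
      = (if p ([], ABC.a, 2) then 1 else 0)
        + (∑ j ∈ Finset.range n,
            ((if p (aF :: alt j, ABC.b, 2) then 1 else 0)
           + (if p ((aF :: alt j) ++ [bF], ABC.a, 0) then 1 else 0)
           + (if p ((aF :: alt j) ++ [bT], ABC.c, 2) then 1 else 0)
           + (if p ((aF :: alt j) ++ [bT, cF], ABC.a, 0) then 1 else 0)))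
        + (if p (aF :: alt n, ABC.a, 0) then 1 else 0)
        + (if p ([aT], ABC.a, 0) then 1 else 0) := by
  rw [Dlist, List.countP_cons, List.countP_append, countP_flatMap, sum_map_range,
      List.countP_cons, List.countP_cons, List.countP_nil]
  simp only [countP_blocks]
  omega

lemma mapsum_Dlist (n : ℕ) (f : List (ABC × Bool) × ABC × ℕ → ℝ) :
    ((Dlist n).map f).sum
      = f ([], ABC.a, 2)
        + (∑ j ∈ Finset.range n,
            (f (aF :: alt j, ABC.b, 2) + f ((aF :: alt j) ++ [bF], ABC.a, 0)
           + f ((aF :: alt j) ++ [bT], ABC.c, 2) + f ((aF :: alt j) ++ [bT, cF], ABC.a, 0)))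
        + f (aF :: alt n, ABC.a, 0) + f ([aT], ABC.a, 0) := by
  rw [Dlist, List.map_cons, List.sum_cons, List.map_append, List.sum_append,
      sum_map_flatMap, sum_map_range]
  simp only [mapsum_blocks, List.map_cons, List.map_nil, List.sum_cons, List.sum_nil]
  ring


/-! ### Inequality lemmas between kHists of different families -/

lemma kHist_ne_of_getLast {k : ℕ} (hk : 1 ≤ k) {h1 h2 : List (ABC × Bool)} {x y : ABC × Bool}
    (e1 : (List.replicate k (ABC.a, false) ++ h1).getLast? = some x)
    (e2 : (List.replicate k (ABC.a, false) ++ h2).getLast? = some y)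
    (hxy : x ≠ y) : kHist ABC.a k h1 ≠ kHist ABC.a k h2 := by
  intro h
  have h2' := kHist_eq_getLast hk h
  rw [e1, e2] at h2'
  exact hxy (by injection h2')

lemma ne_B {k : ℕ} (hk : 1 ≤ k) {h1 : List (ABC × Bool)} {x : ABC × Bool}
    (e1 : (List.replicate k (ABC.a, false) ++ h1).getLast? = some x)
    (hx1 : x ≠ aF) (hx2 : x ≠ cT) (j : ℕ) :
    kHist ABC.a k h1 ≠ kHist ABC.a k (aF :: alt j) := by
  rcases gl_B k j hk with e2 | e2
  exacts [kHist_ne_of_getLast hk e1 e2 hx1, kHist_ne_of_getLast hk e1 e2 hx2]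

lemma kHist_nil' (k : ℕ) (hk : 1 ≤ k) :
    kHist ABC.a k ([] : List (ABC × Bool)) = kHist ABC.a k (aF :: alt 0) := by
  rw [Kz_padded k 0 (by omega)]
  simp [kHist, lastN, alt, aF]

/-! ### The main counts -/

lemma countZ (n k j : ℕ) (hk : 1 ≤ k) :
    (Dlist n).countP (fun e' => decide (kHist ABC.a k e'.1 = kHist ABC.a k (aF :: alt j)))
      = (if min j ((k+1)/2) = 0 then 1 else 0)
        + (∑ j' ∈ Finset.range n, if min j' ((k+1)/2) = min j ((k+1)/2) then 1 else 0)
        + (if min n ((k+1)/2) = min j ((k+1)/2) then 1 else 0) := by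
  rw [countP_Dlist]
  simp only [decide_eq_true_eq]
  have hroot : (kHist ABC.a k ([] : List (ABC × Bool)) = kHist ABC.a k (aF :: alt j))
      ↔ (min j ((k+1)/2) = 0) := by
    rw [kHist_nil' k hk, Kz_eq_iff k 0 j hk]
    omega
  have hsum : ∀ j' : ℕ,
      ((if kHist ABC.a k (aF :: alt j') = kHist ABC.a k (aF :: alt j) then 1 else 0)
       + (if kHist ABC.a k ((aF :: alt j') ++ [bF]) = kHist ABC.a k (aF :: alt j) then 1 else 0)
       + (if kHist ABC.a k ((aF :: alt j') ++ [bT]) = kHist ABC.a k (aF :: alt j) then 1 else 0)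
       + (if kHist ABC.a k ((aF :: alt j') ++ [bT, cF]) = kHist ABC.a k (aF :: alt j) then 1 else 0))
      = (if min j' ((k+1)/2) = min j ((k+1)/2) then 1 else 0) := by
    intro j'
    rw [if_neg (ne_B hk (gl_LB k j') (by decide) (by decide) j),
        if_neg (ne_B hk (gl_C k j') (by decide) (by decide) j),
        if_neg (ne_B hk (gl_LC k j') (by decide) (by decide) j),
        if_congr (Kz_eq_iff k j' j hk) rfl rfl]
    omega
  rw [Finset.sum_congr rfl (fun j' _ => hsum j'), if_congr hroot rfl rfl,
      if_congr (Kz_eq_iff k n j hk) rfl rfl,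
      if_neg (ne_B hk (gl_RL k) (by decide) (by decide) j)]
  omega

lemma countZWb (n k j : ℕ) (hk : 1 ≤ k) :
    (Dlist n).countP (fun e' => decide (kHist ABC.a k e'.1 = kHist ABC.a k (aF :: alt j)
        ∧ e'.2 = ((ABC.b, 2) : ABC × ℕ)))
      = ∑ j' ∈ Finset.range n, if min j' ((k+1)/2) = min j ((k+1)/2) then 1 else 0 := by
  rw [countP_Dlist]
  simp only [decide_eq_true_eq, Prod.mk.injEq, reduceCtorEq, false_and, and_false, if_false,
    and_true, and_self, add_zero, zero_add, Nat.reduceEqDiff]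
  exact Finset.sum_congr rfl (fun j' _ => if_congr (Kz_eq_iff k j' j hk) rfl rfl)


lemma mem_Dlist {n : ℕ} {e : List (ABC × Bool) × ABC × ℕ} (he : e ∈ Dlist n) :
    e = ([], ABC.a, 2) ∨ (∃ j, e = (aF :: alt j, ABC.b, 2))
      ∨ (∃ j, e = ((aF :: alt j) ++ [bF], ABC.a, 0))
      ∨ (∃ j, e = ((aF :: alt j) ++ [bT], ABC.c, 2))
      ∨ (∃ j, e = ((aF :: alt j) ++ [bT, cF], ABC.a, 0))
      ∨ e = (aF :: alt n, ABC.a, 0) ∨ e = ([aT], ABC.a, 0) := by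
  simp only [Dlist, blocks, List.mem_cons, List.mem_append, List.mem_flatMap,
    List.mem_range, List.mem_singleton, List.not_mem_nil, or_false] at he
  tauto

lemma count_eq_of_val {n k : ℕ} (z : List (ABC × Bool)) (w : ABC × ℕ)
    (H : ∀ e ∈ Dlist n, kHist ABC.a k e.1 = z → e.2 = w) :
    (Dlist n).countP (fun e' => decide (kHist ABC.a k e'.1 = z))
      = (Dlist n).countP (fun e' => decide (kHist ABC.a k e'.1 = z ∧ e'.2 = w)) := by
  apply List.countP_congr
  intro e he
  simp only [decide_eq_true_eq]
  exact iff_self_and.mpr (H e he)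

lemma valLB (n k j0 : ℕ) (hk : 1 ≤ k) :
    ∀ e ∈ Dlist n, kHist ABC.a k e.1 = kHist ABC.a k ((aF :: alt j0) ++ [bF]) →
      e.2 = ((ABC.a, 0) : ABC × ℕ) := by
  intro e he hc
  rcases mem_Dlist he with h | ⟨j,h⟩ | ⟨j,h⟩ | ⟨j,h⟩ | ⟨j,h⟩ | h | h <;> subst h
  · exact absurd hc (kHist_ne_of_getLast hk (gl_nil k hk) (gl_LB k j0) (by decide))
  · exact absurd hc ((ne_B hk (gl_LB k j0) (by decide) (by decide) j).symm)
  · rfl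
  · exact absurd hc (kHist_ne_of_getLast hk (gl_C k j) (gl_LB k j0) (by decide))
  · exact absurd hc (kHist_ne_of_getLast hk (gl_LC k j) (gl_LB k j0) (by decide))
  · exact absurd hc ((ne_B hk (gl_LB k j0) (by decide) (by decide) n).symm)
  · exact absurd hc (kHist_ne_of_getLast hk (gl_RL k) (gl_LB k j0) (by decide))

lemma valC (n k j0 : ℕ) (hk : 1 ≤ k) :
    ∀ e ∈ Dlist n, kHist ABC.a k e.1 = kHist ABC.a k ((aF :: alt j0) ++ [bT]) →
      e.2 = ((ABC.c, 2) : ABC × ℕ) := by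
  intro e he hc
  rcases mem_Dlist he with h | ⟨j,h⟩ | ⟨j,h⟩ | ⟨j,h⟩ | ⟨j,h⟩ | h | h <;> subst h
  · exact absurd hc (kHist_ne_of_getLast hk (gl_nil k hk) (gl_C k j0) (by decide))
  · exact absurd hc ((ne_B hk (gl_C k j0) (by decide) (by decide) j).symm)
  · exact absurd hc (kHist_ne_of_getLast hk (gl_LB k j) (gl_C k j0) (by decide))
  · rfl
  · exact absurd hc (kHist_ne_of_getLast hk (gl_LC k j) (gl_C k j0) (by decide))
  · exact absurd hc ((ne_B hk (gl_C k j0) (by decide) (by decide) n).symm)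
  · exact absurd hc (kHist_ne_of_getLast hk (gl_RL k) (gl_C k j0) (by decide))

lemma valLC (n k j0 : ℕ) (hk : 1 ≤ k) :
    ∀ e ∈ Dlist n, kHist ABC.a k e.1 = kHist ABC.a k ((aF :: alt j0) ++ [bT, cF]) →
      e.2 = ((ABC.a, 0) : ABC × ℕ) := by
  intro e he hc
  rcases mem_Dlist he with h | ⟨j,h⟩ | ⟨j,h⟩ | ⟨j,h⟩ | ⟨j,h⟩ | h | h <;> subst h
  · exact absurd hc (kHist_ne_of_getLast hk (gl_nil k hk) (gl_LC k j0) (by decide))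
  · exact absurd hc ((ne_B hk (gl_LC k j0) (by decide) (by decide) j).symm)
  · exact absurd hc (kHist_ne_of_getLast hk (gl_LB k j) (gl_LC k j0) (by decide))
  · exact absurd hc (kHist_ne_of_getLast hk (gl_C k j) (gl_LC k j0) (by decide))
  · rfl
  · exact absurd hc ((ne_B hk (gl_LC k j0) (by decide) (by decide) n).symm)
  · exact absurd hc (kHist_ne_of_getLast hk (gl_RL k) (gl_LC k j0) (by decide))

lemma valRL (n k : ℕ) (hk : 1 ≤ k) :
    ∀ e ∈ Dlist n, kHist ABC.a k e.1 = kHist ABC.a k [aT] →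
      e.2 = ((ABC.a, 0) : ABC × ℕ) := by
  intro e he hc
  rcases mem_Dlist he with h | ⟨j,h⟩ | ⟨j,h⟩ | ⟨j,h⟩ | ⟨j,h⟩ | h | h <;> subst h
  · exact absurd hc (kHist_ne_of_getLast hk (gl_nil k hk) (gl_RL k) (by decide))
  · exact absurd hc ((ne_B hk (gl_RL k) (by decide) (by decide) j).symm)
  · exact absurd hc (kHist_ne_of_getLast hk (gl_LB k j) (gl_RL k) (by decide))
  · exact absurd hc (kHist_ne_of_getLast hk (gl_C k j) (gl_RL k) (by decide))
  · exact absurd hc (kHist_ne_of_getLast hk (gl_LC k j) (gl_RL k) (by decide))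
  · exact absurd hc ((ne_B hk (gl_RL k) (by decide) (by decide) n).symm)
  · rfl


lemma countZWroot (n k : ℕ) (hk : 1 ≤ k) :
    (Dlist n).countP (fun e' => decide (kHist ABC.a k e'.1 = kHist ABC.a k (aF :: alt 0)
        ∧ e'.2 = ((ABC.a, 2) : ABC × ℕ))) = 1 := by
  rw [countP_Dlist]
  simp only [decide_eq_true_eq, Prod.mk.injEq, reduceCtorEq, false_and, and_false, if_false,
    and_true, and_self, add_zero, zero_add, Nat.reduceEqDiff, Finset.sum_const_zero]
  rw [if_pos (kHist_nil' k hk)]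

lemma countZWfin (n k : ℕ) (hk : 1 ≤ k) :
    (Dlist n).countP (fun e' => decide (kHist ABC.a k e'.1 = kHist ABC.a k (aF :: alt n)
        ∧ e'.2 = ((ABC.a, 0) : ABC × ℕ))) = 1 := by
  rw [countP_Dlist]
  simp only [decide_eq_true_eq, Prod.mk.injEq, reduceCtorEq, false_and, and_false, if_false,
    and_true, and_self, add_zero, zero_add, Nat.reduceEqDiff]
  rw [if_neg (ne_B hk (gl_RL k) (by decide) (by decide) n),
      Finset.sum_eq_zero (fun j' _ => by
        rw [if_neg (ne_B hk (gl_LB k j') (by decide) (by decide) n),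
            if_neg (ne_B hk (gl_LC k j') (by decide) (by decide) n)]
        simp)]
  simp

lemma sum_min_lt (n t c : ℕ) (h : c < t) :
    (∑ j' ∈ Finset.range n, if min j' t = c then 1 else 0) = if c < n then 1 else 0 := by
  induction n with
  | zero => simp
  | succ m ih =>
      rw [Finset.sum_range_succ, ih, if_congr (show (min m t = c) ↔ m = c by omega) rfl rfl]
      split_ifs <;> omega

lemma sum_min_ge (n t : ℕ) :
    (∑ j' ∈ Finset.range n, if min j' t = t then 1 else 0) = n - t := by
  induction n with
  | zero => simp
  | succ m ih =>
      rw [Finset.sum_range_succ, ih, if_congr (show (min m t = t) ↔ t ≤ m by omega) rfl rfl]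
      split_ifs <;> omega

lemma logb_div_self_nat (m : ℕ) : Real.logb 2 ((m:ℝ)/(m:ℝ)) = 0 := by
  rcases eq_or_ne (m:ℝ) 0 with h | h
  · simp [h]
  · rw [div_self h, Real.logb_one]


lemma term_b (n k j : ℕ) (hk : 1 ≤ k) (hn : 1 ≤ n) (hj : j < n) :
    Real.logb 2
      ((((Dlist n).countP (fun e' => decide (kHist ABC.a k e'.1 = kHist ABC.a k (aF :: alt j)))) : ℝ)
        / (((Dlist n).countP (fun e' => decide (kHist ABC.a k e'.1 = kHist ABC.a k (aF :: alt j)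
              ∧ e'.2 = ((ABC.b, 2) : ABC × ℕ)))) : ℝ))
      = if j = 0 then 1 else if j < (k+1)/2 then 0 else
          Real.logb 2 (((n - (k+1)/2 + 1 : ℕ) : ℝ) / ((n - (k+1)/2 : ℕ) : ℝ)) := by
  rw [countZ n k j hk, countZWb n k j hk]
  rcases eq_or_ne j 0 with rfl | hj0
  · have hS : (∑ j' ∈ Finset.range n, if min j' ((k+1)/2) = min 0 ((k+1)/2) then 1 else 0) = 1 := by
      rw [show min 0 ((k+1)/2) = 0 by omega, sum_min_lt n ((k+1)/2) 0 (by omega),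
        if_pos (show 0 < n by omega)]
    rw [hS, if_pos (show min 0 ((k+1)/2) = 0 by omega),
        if_neg (show ¬ (min n ((k+1)/2) = min 0 ((k+1)/2)) by omega)]
    norm_num [Real.logb_self_eq_one]
  · rcases lt_or_ge j ((k+1)/2) with hjt | hjt
    · have hS : (∑ j' ∈ Finset.range n, if min j' ((k+1)/2) = min j ((k+1)/2) then 1 else 0) = 1 := by
        rw [show min j ((k+1)/2) = j by omega, sum_min_lt n ((k+1)/2) j (by omega), if_pos hj]
      rw [hS, if_neg (show ¬ (min j ((k+1)/2) = 0) by omega),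
          if_neg (show ¬ (min n ((k+1)/2) = min j ((k+1)/2)) by omega),
          if_neg hj0, if_pos hjt]
      norm_num
    · have hS : (∑ j' ∈ Finset.range n, if min j' ((k+1)/2) = min j ((k+1)/2) then 1 else 0)
          = n - (k+1)/2 := by
        rw [show min j ((k+1)/2) = (k+1)/2 by omega, sum_min_ge n ((k+1)/2)]
      rw [hS, if_neg (show ¬ (min j ((k+1)/2) = 0) by omega),
          if_pos (show min n ((k+1)/2) = min j ((k+1)/2) by omega),
          if_neg hj0, if_neg (show ¬ (j < (k+1)/2) by omega)]
      norm_num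

lemma term_fin (n k : ℕ) (hk : 1 ≤ k) (hn : 1 ≤ n) :
    Real.logb 2
      ((((Dlist n).countP (fun e' => decide (kHist ABC.a k e'.1 = kHist ABC.a k (aF :: alt n)))) : ℝ)
        / (((Dlist n).countP (fun e' => decide (kHist ABC.a k e'.1 = kHist ABC.a k (aF :: alt n)
              ∧ e'.2 = ((ABC.a, 0) : ABC × ℕ)))) : ℝ))
      = if (k+1)/2 ≤ n then Real.logb 2 ((n - (k+1)/2 + 1 : ℕ) : ℝ) else 0 := by
  rw [countZ n k n hk, countZWfin n k hk]
  rcases lt_or_ge n ((k+1)/2) with hnt | hnt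
  · have hS : (∑ j' ∈ Finset.range n, if min j' ((k+1)/2) = min n ((k+1)/2) then 1 else 0) = 0 := by
      rw [show min n ((k+1)/2) = n by omega, sum_min_lt n ((k+1)/2) n (by omega),
        if_neg (lt_irrefl n)]
    rw [hS, if_neg (show ¬ (min n ((k+1)/2) = 0) by omega),
        if_pos (show min n ((k+1)/2) = min n ((k+1)/2) from rfl),
        if_neg (show ¬ ((k+1)/2 ≤ n) by omega)]
    norm_num
  · have hS : (∑ j' ∈ Finset.range n, if min j' ((k+1)/2) = min n ((k+1)/2) then 1 else 0)
        = n - (k+1)/2 := by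
      rw [show min n ((k+1)/2) = (k+1)/2 by omega, sum_min_ge n ((k+1)/2)]
    rw [hS, if_neg (show ¬ (min n ((k+1)/2) = 0) by omega),
        if_pos (show min n ((k+1)/2) = min n ((k+1)/2) from rfl), if_pos hnt]
    norm_num

lemma sum_term (n t : ℕ) (L : ℝ) (hn : 1 ≤ n) (ht : 1 ≤ t) :
    (∑ j ∈ Finset.range n, if j = 0 then (1:ℝ) else if j < t then 0 else L)
      = 1 + ((n - t : ℕ) : ℝ) * L := by
  induction n with
  | zero => omega
  | succ m ih =>
      rcases Nat.lt_or_ge m 1 with hm | hm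
      · interval_cases m
        simp [Nat.sub_eq_zero_of_le ht]
      · rw [Finset.sum_range_succ, ih hm, if_neg (by omega)]
        rcases lt_or_ge m t with h1 | h1
        · rw [if_pos h1, show m + 1 - t = m - t by omega]
          ring
        · rw [if_neg (by omega), show m + 1 - t = (m - t) + 1 by omega]
          push_cast
          ring


lemma term_root (n k : ℕ) (hk : 1 ≤ k) (hn : 1 ≤ n) :
    Real.logb 2
      ((((Dlist n).countP (fun e' => decide (kHist ABC.a k e'.1 = kHist ABC.a k (aF :: alt 0)))) : ℝ)
        / (((Dlist n).countP (fun e' => decide (kHist ABC.a k e'.1 = kHist ABC.a k (aF :: alt 0)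
              ∧ e'.2 = ((ABC.a, 2) : ABC × ℕ)))) : ℝ)) = 1 := by
  rw [countZ n k 0 hk, countZWroot n k hk]
  have hS : (∑ j' ∈ Finset.range n, if min j' ((k+1)/2) = min 0 ((k+1)/2) then 1 else 0) = 1 := by
    rw [show min 0 ((k+1)/2) = 0 by omega, sum_min_lt n ((k+1)/2) 0 (by omega),
      if_pos (show 0 < n by omega)]
  rw [hS, if_pos (show min 0 ((k+1)/2) = 0 by omega),
      if_neg (show ¬ (min n ((k+1)/2) = min 0 ((k+1)/2)) by omega)]
  norm_num [Real.logb_self_eq_one]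

lemma term_LB (n k j : ℕ) (hk : 1 ≤ k) :
    Real.logb 2
      ((((Dlist n).countP (fun e' => decide (kHist ABC.a k e'.1 = kHist ABC.a k ((aF :: alt j) ++ [bF])))) : ℝ)
        / (((Dlist n).countP (fun e' => decide (kHist ABC.a k e'.1 = kHist ABC.a k ((aF :: alt j) ++ [bF])
              ∧ e'.2 = ((ABC.a, 0) : ABC × ℕ)))) : ℝ)) = 0 := by
  rw [count_eq_of_val _ _ (valLB n k j hk)]
  exact logb_div_self_nat _

lemma term_C (n k j : ℕ) (hk : 1 ≤ k) :
    Real.logb 2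
      ((((Dlist n).countP (fun e' => decide (kHist ABC.a k e'.1 = kHist ABC.a k ((aF :: alt j) ++ [bT])))) : ℝ)
        / (((Dlist n).countP (fun e' => decide (kHist ABC.a k e'.1 = kHist ABC.a k ((aF :: alt j) ++ [bT])
              ∧ e'.2 = ((ABC.c, 2) : ABC × ℕ)))) : ℝ)) = 0 := by
  rw [count_eq_of_val _ _ (valC n k j hk)]
  exact logb_div_self_nat _

lemma term_LC (n k j : ℕ) (hk : 1 ≤ k) :
    Real.logb 2
      ((((Dlist n).countP (fun e' => decide (kHist ABC.a k e'.1 = kHist ABC.a k ((aF :: alt j) ++ [bT, cF])))) : ℝ)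
        / (((Dlist n).countP (fun e' => decide (kHist ABC.a k e'.1 = kHist ABC.a k ((aF :: alt j) ++ [bT, cF])
              ∧ e'.2 = ((ABC.a, 0) : ABC × ℕ)))) : ℝ)) = 0 := by
  rw [count_eq_of_val _ _ (valLC n k j hk)]
  exact logb_div_self_nat _

lemma term_RL (n k : ℕ) (hk : 1 ≤ k) :
    Real.logb 2
      ((((Dlist n).countP (fun e' => decide (kHist ABC.a k e'.1 = kHist ABC.a k [aT]))) : ℝ)
        / (((Dlist n).countP (fun e' => decide (kHist ABC.a k e'.1 = kHist ABC.a k [aT]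
              ∧ e'.2 = ((ABC.a, 0) : ABC × ℕ)))) : ℝ)) = 0 := by
  rw [count_eq_of_val _ _ (valRL n k hk)]
  exact logb_div_self_nat _

lemma Hls_eval (n k : ℕ) (hn : 1 ≤ n) (hk : 1 ≤ k) :
    Hls ABC.a k (fcnsT ABC.a (tBC n))
      = 2 + ((n - (k+1)/2 : ℕ) : ℝ)
            * Real.logb 2 (((n - (k+1)/2 + 1 : ℕ) : ℝ) / ((n - (k+1)/2 : ℕ) : ℝ))
        + (if (k+1)/2 ≤ n then Real.logb 2 ((n - (k+1)/2 + 1 : ℕ) : ℝ) else 0) := by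
  simp only [Hls, entropySum, ldata_fcnsT]
  rw [mapsum_Dlist]
  dsimp only
  simp only [kHist_nil' k hk]
  rw [term_root n k hk hn, term_fin n k hk hn, term_RL n k hk]
  rw [Finset.sum_congr rfl (fun j hj => by
    rw [term_b n k j hk hn (Finset.mem_range.mp hj), term_LB n k j hk, term_C n k j hk,
        term_LC n k j hk, add_zero, add_zero, add_zero])]
  rw [sum_term n ((k+1)/2) _ hn (by omega)]
  ring


lemma Hls_bound (n k : ℕ) (hn : 1 ≤ n) (hk : 1 ≤ k) :
    Hls ABC.a k (fcnsT ABC.a (tBC n)) ≤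
      Real.logb 2 (Real.exp 1) + Real.logb 2 ((n : ℝ) - ((k - 1) / 2 : ℕ)) + 2 := by
  rw [Hls_eval n k hn hk]
  have ht1 : 1 ≤ (k+1)/2 := by omega
  have htk : (k - 1)/2 = (k+1)/2 - 1 := by omega
  have hlog2 : 0 < Real.log 2 := Real.log_pos (by norm_num)
  have hlogbe : 0 < Real.logb 2 (Real.exp 1) := by
    rw [Real.logb, Real.log_exp]; positivity
  rcases le_or_gt ((k+1)/2) n with hcase | hcase
  · have hmid : ((n - (k+1)/2 + 1 : ℕ) : ℝ) = (n:ℝ) - (((k-1)/2 : ℕ) : ℝ) := by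
      rw [htk, eq_sub_iff_add_eq]
      exact_mod_cast (show ((n - (k+1)/2 + 1) + ((k+1)/2 - 1) : ℕ) = n by omega)
    rw [if_pos hcase, ← hmid]
    have key : ((n - (k+1)/2 : ℕ) : ℝ)
        * Real.logb 2 (((n - (k+1)/2 + 1 : ℕ) : ℝ) / ((n - (k+1)/2 : ℕ) : ℝ))
        ≤ Real.logb 2 (Real.exp 1) := by
      rcases Nat.eq_zero_or_pos (n - (k+1)/2) with h0 | hpos
      · rw [h0]
        norm_num
        exact le_of_lt hlogbe
      · have hr : (0:ℝ) < ((n - (k+1)/2 : ℕ) : ℝ) := by exact_mod_cast hpos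
        have hfrac : (0:ℝ) < ((n - (k+1)/2 + 1 : ℕ) : ℝ) / ((n - (k+1)/2 : ℕ) : ℝ) := by
          positivity
        have hlog : Real.log (((n - (k+1)/2 + 1 : ℕ) : ℝ) / ((n - (k+1)/2 : ℕ) : ℝ))
            ≤ 1 / ((n - (k+1)/2 : ℕ) : ℝ) := by
          have h2 := Real.log_le_sub_one_of_pos hfrac
          have h3 : ((n - (k+1)/2 + 1 : ℕ) : ℝ) / ((n - (k+1)/2 : ℕ) : ℝ) - 1
              = 1 / ((n - (k+1)/2 : ℕ) : ℝ) := by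
            rw [div_sub_one hr.ne']
            congr 1
            have : ((n - (k+1)/2 + 1 : ℕ) : ℝ) = ((n - (k+1)/2 : ℕ) : ℝ) + 1 := by
              exact_mod_cast rfl
            linarith
          linarith
        rw [Real.logb, Real.logb, Real.log_exp]
        calc ((n - (k+1)/2 : ℕ) : ℝ)
              * (Real.log (((n - (k+1)/2 + 1 : ℕ) : ℝ) / ((n - (k+1)/2 : ℕ) : ℝ)) / Real.log 2)
            ≤ ((n - (k+1)/2 : ℕ) : ℝ) * ((1 / ((n - (k+1)/2 : ℕ) : ℝ)) / Real.log 2) := by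
              gcongr
          _ = 1 / Real.log 2 := by
              have hlt : (((k+1)/2 : ℕ) : ℝ) < (n:ℝ) := by
                exact_mod_cast (show (k+1)/2 < n by omega)
              field_simp
    linarith
  · have h0 : n - (k+1)/2 = 0 := by omega
    have hnonneg : 0 ≤ Real.logb 2 ((n:ℝ) - (((k-1)/2 : ℕ) : ℝ)) := by
      rcases eq_or_lt_of_le (show n ≤ (k-1)/2 by omega) with heq | hlt
      · rw [show (n:ℝ) - (((k-1)/2 : ℕ) : ℝ) = 0 by rw [← heq]; ring, Real.logb_zero]
      · have hx : (n:ℝ) - (((k-1)/2 : ℕ) : ℝ) ≤ -1 := by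
          have h1 : (n + 1 : ℕ) ≤ (k-1)/2 := by omega
          have h2 : ((n:ℝ) + 1) ≤ (((k-1)/2 : ℕ) : ℝ) := by exact_mod_cast h1
          linarith
        have habs : 1 ≤ |(n:ℝ) - (((k-1)/2 : ℕ) : ℝ)| := by
          rw [abs_of_nonpos (by linarith)]; linarith
        rw [Real.logb, ← Real.log_abs]
        exact div_nonneg (Real.log_nonneg habs) hlog2.le
    rw [h0, if_neg (by omega)]
    simp only [Nat.cast_zero, zero_mul, add_zero]
    linarith

end TBCproof

/-- For `t_n = a((bc)^n)` and any `k ≥ 1` (with padding symbol `a`):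
(i) `|t_n| = 2n + 1`; (ii) `H^{deg,ℓ}_k(t_n) = 2n`; (iii) `H^ℓ_k(t_n) ≥ 2n`;
(iv) `H_k(t_n) ≤ log2 e + log2 (n - ⌊(k-1)/2⌋) + 2`. -/
theorem tBC_entropies (n k : ℕ) (hn : 1 ≤ n) (hk : 1 ≤ k) :
    sizeU (tBC n) = 2 * n + 1 ∧
    HdlU ABC.a k (tBC n) = 2 * n ∧
    (2 * n : ℝ) ≤ HlU ABC.a k (tBC n) ∧
    Hls ABC.a k (fcnsT ABC.a (tBC n)) ≤
      Real.logb 2 (Real.exp 1) + Real.logb 2 ((n : ℝ) - ((k - 1) / 2 : ℕ)) + 2 := by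
  exact ⟨TBCproof.sizeU_tBC n, TBCproof.HdlU_tBC n k hn, TBCproof.HlU_tBC n k hn,
    TBCproof.Hls_bound n k hn hk⟩
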